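/- Let k be a field, m a natural number with char(k) ∤ m, a ∈ k, and let ω_m denote the number of m-th roots of unity contained in k. If a^{ω_m} = r^m for some r ∈ k, then the Galois group Gal(k(ζ_m, a^{1/m}) / k) is abelian. -/

import Mathlib

open Polynomial IntermediateField

private theorem schinzel_aux {k K : Type*} [Field k] [Field K] [Algebra k K]
    {m : ℕ} (hm : 0 < m) {a r η : k} {ω : ℕ} (hω0 : ω ≠ 0) (ha : a ≠ 0)
    (hr : a ^ ω = r ^ m) (hηm : η ^ m = 1) (hηord : orderOf η = ω)
    {α : K} (hαm : α ^ m = algebraMap k K a)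
    (σ τ : K ≃ₐ[k] K) {β : K} (hβm : β ^ m = algebraMap k K a) :
    σ (τ β) = τ (σ β) := by
  haveI : NeZero m := ⟨hm.ne'⟩
  have hA : algebraMap k K a ≠ 0 :=
    (map_ne_zero_iff _ (algebraMap k K).injective).mpr ha
  have hα0 : α ≠ 0 := fun h0 => hA <| by rw [← hαm, h0, zero_pow hm.ne']
  -- roots of unity in K
  obtain ⟨g, hg⟩ := IsCyclic.exists_generator (α := rootsOfUnity m K)
  set d : ℕ := orderOf (g : Kˣ) with hd
  set ζ : K := ((g : Kˣ) : K) with hζ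
  have hζ0 : ζ ≠ 0 := Units.ne_zero _
  have hζd : ∀ i : ℤ, ζ ^ i = 1 ↔ (d : ℤ) ∣ i := by
    intro i
    have h1 : ζ ^ i = 1 ↔ (g : Kˣ) ^ i = 1 := by
      rw [hζ, ← Units.val_zpow_eq_zpow_val, Units.val_eq_one]
    rw [h1, ← orderOf_dvd_iff_zpow_eq_one]
  have hmem : ∀ x : K, x ^ m = 1 → ∃ i : ℕ, x = ζ ^ i := by
    intro x hx
    have hx0 : x ≠ 0 := fun h0 => one_ne_zero (α := K) <| by rw [← hx, h0, zero_pow hm.ne']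
    have hxu : Units.mk0 x hx0 ∈ rootsOfUnity m K :=
      (mem_rootsOfUnity' m _).mpr (by simpa using hx)
    have hfin : IsOfFinOrder g := isOfFinOrder_of_finite g
    obtain ⟨i, hi⟩ := hfin.mem_powers_iff_mem_zpowers.mpr (hg ⟨Units.mk0 x hx0, hxu⟩)
    refine ⟨i, ?_⟩
    have : ((g : Kˣ) : K) ^ i = x := by
      have := congrArg (fun z : rootsOfUnity m K => ((z : Kˣ) : K)) hi
      simpa using this
    exact this.symm
  have hcmp : ∀ x y : ℕ, ζ ^ x = ζ ^ y → (d : ℤ) ∣ (x : ℤ) - y := by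
    intro x y hxy
    rw [← hζd, zpow_sub₀ hζ0, zpow_natCast, zpow_natCast, hxy,
      div_self (pow_ne_zero _ hζ0)]
  have hcmp' : ∀ x y : ℕ, (d : ℤ) ∣ (x : ℤ) - y → ζ ^ x = ζ ^ y := by
    intro x y hxy
    have h1 := (hζd _).mpr hxy
    rwa [zpow_sub₀ hζ0, zpow_natCast, zpow_natCast,
      div_eq_one_iff_eq (pow_ne_zero _ hζ0)] at h1
  have hζm : ζ ^ m = 1 := (mem_rootsOfUnity' m _).mp g.2
  -- exponents
  have hsx : ∀ σ' : K ≃ₐ[k] K, ∃ s : ℕ, σ' ζ = ζ ^ s := fun σ' =>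
    hmem _ (by rw [← map_pow, hζm, map_one])
  have htx : ∀ σ' : K ≃ₐ[k] K, ∃ t : ℕ, σ' α = ζ ^ t * α := by
    intro σ'
    obtain ⟨t, ht⟩ := hmem (σ' α * α⁻¹) (by
      rw [mul_pow, ← map_pow, hαm, AlgEquiv.commutes, inv_pow, hαm,
        mul_inv_cancel₀ hA])
    exact ⟨t, (mul_inv_eq_iff_eq_mul₀ hα0).mp ht⟩
  obtain ⟨s1, hs1⟩ := hsx σ
  obtain ⟨s2, hs2⟩ := hsx τ
  obtain ⟨t1, ht1⟩ := htx σ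
  obtain ⟨t2, ht2⟩ := htx τ
  -- the element e = algebraMap η of order ω
  have hη0 : η ≠ 0 := fun h0 => one_ne_zero (α := k) <| by rw [← hηm, h0, zero_pow hm.ne']
  set e : K := algebraMap k K η with he
  have he0 : e ≠ 0 := (map_ne_zero_iff _ (algebraMap k K).injective).mpr hη0
  have heord : orderOf e = ω := by
    rw [he, ← hηord]
    exact orderOf_injective (algebraMap k K).toMonoidHom (algebraMap k K).injective η
  have hem : e ^ m = 1 := by rw [he, ← map_pow, hηm, map_one]
  obtain ⟨j, hj⟩ := hmem e hem
  -- ω ∣ s - 1 for each automorphism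
  have hsmod : ∀ (σ' : K ≃ₐ[k] K) (s : ℕ), σ' ζ = ζ ^ s → (ω : ℤ) ∣ (s : ℤ) - 1 := by
    intro σ' s hs
    have hes : e ^ s = e := by
      conv_lhs => rw [hj]
      rw [← pow_mul, mul_comm, pow_mul, ← hs, ← map_pow, ← hj, AlgEquiv.commutes]
    set eu : Kˣ := Units.mk0 e he0 with heu
    have heus : eu ^ s = eu := Units.ext (by rw [Units.val_pow_eq_pow_val, heu, Units.val_mk0]; exact hes)
    have hzp : eu ^ ((s : ℤ) - 1) = 1 := by
      rw [zpow_sub, zpow_one, zpow_natCast, heus, mul_inv_cancel]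
    have hdvd := orderOf_dvd_iff_zpow_eq_one.mpr hzp
    rwa [← orderOf_units (y := eu), heu, Units.val_mk0, heord] at hdvd
  have h1 := hsmod σ s1 hs1
  have h2 := hsmod τ s2 hs2
  -- the constant c with α ^ ω = ζ ^ c * R
  have hr0 : r ≠ 0 := by
    intro h0
    rw [h0, zero_pow hm.ne'] at hr
    exact ha (pow_eq_zero_iff hω0 |>.mp hr)
  set R : K := algebraMap k K r with hR
  have hR0 : R ≠ 0 := (map_ne_zero_iff _ (algebraMap k K).injective).mpr hr0
  have h5 : (α ^ ω) ^ m = R ^ m := by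
    rw [← pow_mul, mul_comm ω m, pow_mul, hαm, ← map_pow, hr, map_pow]
  obtain ⟨c, hc⟩ := hmem (α ^ ω * R⁻¹) (by
    rw [mul_pow, h5, inv_pow, mul_inv_cancel₀ (pow_ne_zero _ hR0)])
  have hcR : α ^ ω = ζ ^ c * R := (mul_inv_eq_iff_eq_mul₀ hR0).mp hc
  -- relation: d ∣ t*ω + c - s*c
  have hrel : ∀ (σ' : K ≃ₐ[k] K) (s t : ℕ), σ' ζ = ζ ^ s → σ' α = ζ ^ t * α →
      (d : ℤ) ∣ (t : ℤ) * ω + c - (s : ℤ) * c := by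
    intro σ' s t hs ht
    have happ := congrArg σ' hcR
    rw [map_pow, ht, mul_pow, ← pow_mul, map_mul, map_pow, hs, ← pow_mul,
      AlgEquiv.commutes, ← hR, hcR] at happ
    -- happ : ζ ^ (t * ω) * (ζ ^ c * R) = ζ ^ (s * c) * R
    have h6 : ζ ^ (t * ω + c) * R = ζ ^ (s * c) * R := by
      rw [pow_add, mul_assoc]; exact happ
    have h7 := hcmp _ _ (mul_right_cancel₀ hR0 h6)
    have h8 : ((t * ω + c : ℕ) : ℤ) - ((s * c : ℕ) : ℤ)
        = (t : ℤ) * ω + c - (s : ℤ) * c := by push_cast; ring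
    rwa [h8] at h7
  have h3 := hrel σ s1 t1 hs1 ht1
  have h4 := hrel τ s2 t2 hs2 ht2
  -- arithmetic
  have harith : (d : ℤ) ∣ ((s1 : ℤ) * t2 + t1) - ((s2 : ℤ) * t1 + t2) := by
    obtain ⟨u, hu⟩ := h1
    obtain ⟨v, hv⟩ := h2
    obtain ⟨x, hx⟩ := h3
    obtain ⟨y, hy⟩ := h4
    refine ⟨u * y - v * x, ?_⟩
    linear_combination (t2 : ℤ) * hu - (t1 : ℤ) * hv + u * hy - v * hx
      + (c : ℤ) * u * hv - (c : ℤ) * v * hu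
  -- action on a general root
  have hact : ∀ (σ' : K ≃ₐ[k] K) (s t : ℕ), σ' ζ = ζ ^ s → σ' α = ζ ^ t * α →
      ∀ i : ℕ, σ' (ζ ^ i * α) = ζ ^ (s * i + t) * α := by
    intro σ' s t hs ht i
    rw [map_mul, map_pow, hs, ht, ← pow_mul, pow_add, mul_assoc]
  have hβu : (β * α⁻¹) ^ m = 1 := by
    rw [mul_pow, hβm, inv_pow, hαm, mul_inv_cancel₀ hA]
  obtain ⟨i, hi⟩ := hmem _ hβu
  have hβ : β = ζ ^ i * α := (mul_inv_eq_iff_eq_mul₀ hα0).mp hi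
  rw [hβ, hact τ s2 t2 hs2 ht2 i, hact σ s1 t1 hs1 ht1 _,
    hact σ s1 t1 hs1 ht1 i, hact τ s2 t2 hs2 ht2 _]
  have hpe : ζ ^ (s1 * (s2 * i + t2) + t1) = ζ ^ (s2 * (s1 * i + t1) + t2) := by
    apply hcmp'
    have hcalc : ((s1 * (s2 * i + t2) + t1 : ℕ) : ℤ) - ((s2 * (s1 * i + t1) + t2 : ℕ) : ℤ)
        = ((s1 : ℤ) * t2 + t1) - ((s2 : ℤ) * t1 + t2) := by push_cast; ring
    rw [hcalc]
    exact harith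
  rw [hpe]

/-- One direction of Schinzel's theorem: let `k` be a field, `m` a natural number not
divisible by `char k`, and `ω_m` the number of `m`-th roots of unity in `k`.  If
`a^(ω_m) = r^m` for some `r ∈ k`, then the Galois group of the splitting field of
`x^m − a` over `k` (that is, of `k(ζ_m, a^{1/m})/k`) is abelian. -/
theorem stmt_8 (k : Type*) [Field k] (m : ℕ) (hm : 0 < m) (hchar : ¬ (ringChar k ∣ m))
    (a : k) (h : ∃ r : k, a ^ (Nat.card {x : k // x ^ m = 1}) = r ^ m) :
    ∀ σ τ : ((X ^ m - C a).SplittingField ≃ₐ[k] (X ^ m - C a).SplittingField),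
      σ * τ = τ * σ := by
  intro σ τ
  haveI : NeZero m := ⟨hm.ne'⟩
  obtain ⟨r, hr⟩ := h
  have key : ∀ β : (X ^ m - C a).SplittingField,
      β ^ m = algebraMap k _ a → σ (τ β) = τ (σ β) := by
    by_cases ha : a = 0
    · subst ha
      intro β hβ
      have hβ0 : β = 0 := by
        have hβ' : β ^ m = 0 := by rw [hβ]; exact map_zero _
        exact pow_eq_zero_iff hm.ne' |>.mp hβ'
      simp [hβ0]
    · -- get a root α
      have hsp : Splits ((X ^ m - C a).map (algebraMap k (X ^ m - C a).SplittingField)) :=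
        SplittingField.splits _
      have hdeg : (X ^ m - C a).degree ≠ 0 := by
        rw [degree_eq_natDegree (X_pow_sub_C_ne_zero hm a), natDegree_X_pow_sub_C]
        exact_mod_cast hm.ne'
      obtain ⟨α, hα⟩ := hsp.exists_eval_eq_zero (by rwa [degree_map])
      have hαm : α ^ m = algebraMap k _ a := by
        simp only [eval_map, eval₂_sub, eval₂_pow, eval₂_X, eval₂_C, sub_eq_zero] at hα
        exact hα
      -- ω facts
      have hωcard : Nat.card {x : k // x ^ m = 1} = Nat.card (rootsOfUnity m k) := by
        refine Nat.card_congr ?_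
        exact (Equiv.subtypeEquivRight fun x => (mem_nthRoots hm).symm).trans
          (rootsOfUnityEquivNthRoots k m).symm
      have hω0 : Nat.card {x : k // x ^ m = 1} ≠ 0 := by
        rw [hωcard]; exact Nat.card_pos.ne'
      obtain ⟨gk, hgk⟩ := IsCyclic.exists_generator (α := rootsOfUnity m k)
      have hηord : orderOf (((gk : kˣ) : k)) = Nat.card {x : k // x ^ m = 1} := by
        rw [orderOf_units, Subgroup.orderOf_coe, hωcard,
          orderOf_eq_card_of_forall_mem_zpowers hgk]
      have hηm : ((gk : kˣ) : k) ^ m = 1 := (mem_rootsOfUnity' m _).mp gk.2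
      intro β hβm
      exact schinzel_aux hm hω0 ha hr hηm hηord hαm σ τ hβm
  -- conclude from the action on roots
  have hadj : Algebra.adjoin k ((X ^ m - C a).rootSet (X ^ m - C a).SplittingField) = ⊤ :=
    IsSplittingField.adjoin_rootSet _ _
  have hle : Algebra.adjoin k ((X ^ m - C a).rootSet (X ^ m - C a).SplittingField) ≤
      AlgHom.equalizer (σ * τ).toAlgHom (τ * σ).toAlgHom := by
    refine Algebra.adjoin_le ?_
    intro β hβ
    rw [SetLike.mem_coe, AlgHom.mem_equalizer]
    have hβm : β ^ m = algebraMap k _ a := by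
      have h9 := (mem_rootSet.mp hβ).2
      simp only [map_sub, map_pow, aeval_X, aeval_C, sub_eq_zero] at h9
      exact h9
    simpa [AlgEquiv.mul_apply] using key β hβm
  refine AlgEquiv.ext fun x => ?_
  have hx : x ∈ Algebra.adjoin k ((X ^ m - C a).rootSet (X ^ m - C a).SplittingField) :=
    hadj.symm ▸ Algebra.mem_top
  exact (AlgHom.mem_equalizer _ _ _).mp (hle hx)
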